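/- If every edge of a graph G can be oriented so that each vertex has outdegree at most b, and G has diameter at most k and maximum degree at most Δ, then for every vertex v the number of vertices reachable from v by a path of length ℓ ≤ k containing at least ⌈ℓ/2⌉ forward-oriented edges is at most ∑_{ℓ=1}^{k} ∑_{i=⌈ℓ/2⌉}^{ℓ} C(ℓ,i) b^i Δ^{ℓ−i} ≤ 2k(2b)^k Δ^{⌊k/2⌋}. -/

import Mathlib

open Finset

section aux

variable {V : Type*}

/-- Count of forward (`D`-oriented) steps along the path `v :: l`. -/
def countFwd (D : V → V → Prop) [DecidableRel D] : V → List V → ℕ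
  | _, [] => 0
  | v, (u :: t) => (if D v u then 1 else 0) + countFwd D u t

lemma countP_darts_eq {G : SimpleGraph V} (D : V → V → Prop) [DecidableRel D]
    {v w : V} (p : G.Walk v w) :
    p.darts.countP (fun d => decide (D d.toProd.1 d.toProd.2)) = countFwd D v p.support.tail := by
  induction p with
  | nil => simp [countFwd]
  | @cons a u c h p ih =>
    rw [SimpleGraph.Walk.darts_cons, List.countP_cons, ih,
      SimpleGraph.Walk.support_cons, List.tail_cons, p.support_eq_cons]
    show _ = countFwd D a (u :: p.support.tail)
    rw [countFwd]
    by_cases hd : D a u <;> simp [hd, add_comm]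

lemma ncard_biUnion_le {α β : Type*} (s : Finset α) (t : α → Set β)
    (h : ∀ a ∈ s, (t a).Finite) :
    (⋃ a ∈ s, t a).ncard ≤ ∑ a ∈ s, (t a).ncard := by
  classical
  induction s using Finset.induction with
  | empty => simp
  | @insert a s ha ih =>
    rw [Finset.sum_insert ha]
    have : (⋃ x ∈ insert a s, t x) = t a ∪ ⋃ x ∈ s, t x := by
      simp [Set.biUnion_insert]
    rw [this]
    exact le_trans (Set.ncard_union_le _ _)
      (by
        gcongr
        exact ih (fun x hx => h x (Finset.mem_insert_of_mem hx)))

lemma icc_zero_pow (b Δ n : ℕ) :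
    ∑ i ∈ Icc 0 n, n.choose i * b ^ i * Δ ^ (n - i) = (b + Δ) ^ n := by
  rw [add_pow]
  rw [show Icc 0 n = range (n+1) by ext x; simp [Nat.lt_succ_iff]]
  exact Finset.sum_congr rfl fun i _ => by simp only [Nat.cast_id]; ring

lemma step_bound (b Δ ℓ m : ℕ) :
    b * (∑ i ∈ Icc (m-1) ℓ, ℓ.choose i * b ^ i * Δ ^ (ℓ - i)) +
      Δ * (∑ i ∈ Icc m ℓ, ℓ.choose i * b ^ i * Δ ^ (ℓ - i)) ≤
    ∑ i ∈ Icc m (ℓ+1), (ℓ+1).choose i * b ^ i * Δ ^ (ℓ + 1 - i) := by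
  rcases Nat.eq_zero_or_pos m with rfl | hm
  · simp only [Nat.zero_sub, icc_zero_pow]
    apply le_of_eq
    ring
  rcases le_or_gt m (ℓ+1) with hle | hgt
  · have e1 : b * (∑ i ∈ Icc (m-1) ℓ, ℓ.choose i * b ^ i * Δ ^ (ℓ - i))
        = ∑ j ∈ Icc m (ℓ+1), ℓ.choose (j-1) * b ^ j * Δ ^ (ℓ + 1 - j) := by
      rw [Finset.mul_sum]
      rw [show Icc m (ℓ+1) = (Icc (m-1) ℓ).map (addRightEmbedding 1) by
        rw [Finset.map_add_right_Icc, Nat.sub_add_cancel hm]]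
      rw [Finset.sum_map]
      refine Finset.sum_congr rfl fun i hi => ?_
      have hiℓ : i ≤ ℓ := (mem_Icc.mp hi).2
      simp only [addRightEmbedding_apply]
      rw [Nat.add_sub_cancel, show ℓ + 1 - (i + 1) = ℓ - i by omega]
      ring
    have e2 : Δ * (∑ i ∈ Icc m ℓ, ℓ.choose i * b ^ i * Δ ^ (ℓ - i))
        = ∑ i ∈ Icc m ℓ, ℓ.choose i * b ^ i * Δ ^ (ℓ + 1 - i) := by
      rw [Finset.mul_sum]
      refine Finset.sum_congr rfl fun i hi => ?_
      have hiℓ : i ≤ ℓ := (mem_Icc.mp hi).2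
      rw [show ℓ + 1 - i = (ℓ - i) + 1 by omega, pow_succ]
      ring
    have e3 : ∑ i ∈ Icc m ℓ, ℓ.choose i * b ^ i * Δ ^ (ℓ + 1 - i)
        ≤ ∑ i ∈ Icc m (ℓ+1), ℓ.choose i * b ^ i * Δ ^ (ℓ + 1 - i) :=
      Finset.sum_le_sum_of_subset (Finset.Icc_subset_Icc_right (by omega))
    rw [e1, e2]
    calc _ ≤ (∑ j ∈ Icc m (ℓ+1), ℓ.choose (j-1) * b ^ j * Δ ^ (ℓ + 1 - j)) +
        ∑ i ∈ Icc m (ℓ+1), ℓ.choose i * b ^ i * Δ ^ (ℓ + 1 - i) := Nat.add_le_add le_rfl e3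
      _ = _ := by
        rw [← Finset.sum_add_distrib]
        refine Finset.sum_congr rfl fun j hj => ?_
        have hj1 : 1 ≤ j := le_trans hm (mem_Icc.mp hj).1
        obtain ⟨j', rfl⟩ : ∃ j', j = j' + 1 := ⟨j - 1, by omega⟩
        rw [Nat.add_sub_cancel, Nat.choose_succ_succ]
        ring
  · rw [Finset.Icc_eq_empty (by omega : ¬ (m - 1) ≤ ℓ),
      Finset.Icc_eq_empty (by omega : ¬ m ≤ ℓ),
      Finset.Icc_eq_empty (by omega : ¬ m ≤ ℓ + 1)]
    simp

lemma listBound [Fintype V] (G : SimpleGraph V) (D : V → V → Prop) [DecidableRel D]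
    (b Δ : ℕ)
    (hout : ∀ v : V, {w | D v w}.ncard ≤ b)
    (hmax : ∀ v : V, (G.neighborSet v).ncard ≤ Δ) :
    ∀ ℓ m (v : V),
      {l : List V | l.length = ℓ ∧ List.Chain G.Adj v l ∧ m ≤ countFwd D v l}.ncard
        ≤ ∑ i ∈ Icc m ℓ, ℓ.choose i * b ^ i * Δ ^ (ℓ - i) := by
  intro ℓ
  induction ℓ with
  | zero =>
    intro m v
    rcases Nat.eq_zero_or_pos m with rfl | hm
    · have h1 : {l : List V | l.length = 0 ∧ List.Chain G.Adj v l ∧ 0 ≤ countFwd D v l}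
          = {([] : List V)} := by
        ext l
        simp only [Set.mem_setOf_eq, Set.mem_singleton_iff, List.length_eq_zero_iff, Nat.zero_le,
          and_true]
        constructor
        · exact fun h => h.1
        · rintro rfl; exact ⟨rfl, List.Chain.nil⟩
      rw [h1]; simp
    · have h1 : {l : List V | l.length = 0 ∧ List.Chain G.Adj v l ∧ m ≤ countFwd D v l}
          = ∅ := by
        ext l
        simp only [Set.mem_setOf_eq, Set.mem_empty_iff_false, iff_false, not_and]
        intro hl
        rw [List.length_eq_zero_iff] at hl; subst hl
        intro _; simp only [countFwd]; omega
      rw [h1, Finset.Icc_eq_empty (by omega)]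
      simp
  | succ ℓ ih =>
    intro m v
    classical
    set N : Finset V := (G.neighborSet v).toFinite.toFinset with hN
    set T : V → Set (List V) := fun u =>
      {t | t.length = ℓ ∧ List.Chain G.Adj u t ∧ m - (if D v u then 1 else 0) ≤ countFwd D u t}
      with hT
    have hTfin : ∀ u, (T u).Finite := fun u =>
      (List.finite_length_eq V ℓ).subset fun t ht => ht.1
    have hsub : {l : List V | l.length = ℓ+1 ∧ List.Chain G.Adj v l ∧ m ≤ countFwd D v l}
        ⊆ ⋃ u ∈ N, (List.cons u) '' T u := by
      rintro l ⟨hlen, hch, hcnt⟩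
      obtain ⟨u, t, rfl⟩ : ∃ u t, l = u :: t := by
        cases l with
        | nil => simp at hlen
        | cons u t => exact ⟨u, t, rfl⟩
      change List.IsChain G.Adj (v :: u :: t) at hch
      rw [List.isChain_cons_cons] at hch
      simp only [Set.mem_iUnion]
      refine ⟨u, ?_, t, ⟨?_, hch.2, ?_⟩, rfl⟩
      · simp only [hN, Set.Finite.mem_toFinset, SimpleGraph.mem_neighborSet]
        exact hch.1
      · simpa using hlen
      · have he : countFwd D v (u :: t) = (if D v u then 1 else 0) + countFwd D u t := rfl
        rw [he] at hcnt
        by_cases hd : D v u <;> simp only [hd, if_true, if_false] at hcnt ⊢ <;> omega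
    have hbd : ∀ u, (T u).ncard ≤
        ∑ i ∈ Icc (m - (if D v u then 1 else 0)) ℓ, ℓ.choose i * b ^ i * Δ ^ (ℓ - i) :=
      fun u => ih _ u
    calc {l : List V | l.length = ℓ+1 ∧ List.Chain G.Adj v l ∧ m ≤ countFwd D v l}.ncard
        ≤ (⋃ u ∈ N, (List.cons u) '' T u).ncard :=
          Set.ncard_le_ncard hsub
            (Set.Finite.biUnion N.finite_toSet fun u _ => (hTfin u).image _)
      _ ≤ ∑ u ∈ N, ((List.cons u) '' T u).ncard :=
          ncard_biUnion_le _ _ (fun u _ => (hTfin u).image _)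
      _ = ∑ u ∈ N, (T u).ncard :=
          Finset.sum_congr rfl fun u _ => Set.ncard_image_of_injective _ (List.cons_injective)
      _ ≤ b * (∑ i ∈ Icc (m-1) ℓ, ℓ.choose i * b ^ i * Δ ^ (ℓ - i)) +
            Δ * (∑ i ∈ Icc m ℓ, ℓ.choose i * b ^ i * Δ ^ (ℓ - i)) := ?_
      _ ≤ ∑ i ∈ Icc m (ℓ+1), (ℓ+1).choose i * b ^ i * Δ ^ (ℓ + 1 - i) := step_bound b Δ ℓ m
    rw [← Finset.sum_filter_add_sum_filter_not N (fun u => D v u)]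
    apply Nat.add_le_add
    · calc ∑ u ∈ N.filter (fun u => D v u), (T u).ncard
          ≤ ∑ _u ∈ N.filter (fun u => D v u),
              (∑ i ∈ Icc (m-1) ℓ, ℓ.choose i * b ^ i * Δ ^ (ℓ - i)) := by
            refine Finset.sum_le_sum fun u hu => ?_
            have hd : D v u := (Finset.mem_filter.mp hu).2
            have := hbd u
            rwa [if_pos hd] at this
        _ = (N.filter (fun u => D v u)).card *
              (∑ i ∈ Icc (m-1) ℓ, ℓ.choose i * b ^ i * Δ ^ (ℓ - i)) := by
            rw [Finset.sum_const, smul_eq_mul]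
        _ ≤ b * (∑ i ∈ Icc (m-1) ℓ, ℓ.choose i * b ^ i * Δ ^ (ℓ - i)) := by
            apply Nat.mul_le_mul_right
            have hss : ((N.filter (fun u => D v u) : Finset V) : Set V) ⊆ {w | D v w} :=
              fun u hu => (Finset.mem_filter.mp (by exact_mod_cast hu)).2
            calc (N.filter (fun u => D v u)).card
                = ((N.filter (fun u => D v u) : Finset V) : Set V).ncard :=
                  (Set.ncard_coe_finset _).symm
              _ ≤ ({w | D v w} : Set V).ncard := Set.ncard_le_ncard hss (Set.toFinite _)
              _ ≤ b := hout v
    · calc ∑ u ∈ N.filter (fun u => ¬ D v u), (T u).ncard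
          ≤ ∑ _u ∈ N.filter (fun u => ¬ D v u),
              (∑ i ∈ Icc m ℓ, ℓ.choose i * b ^ i * Δ ^ (ℓ - i)) := by
            refine Finset.sum_le_sum fun u hu => ?_
            have hd : ¬ D v u := (Finset.mem_filter.mp hu).2
            have := hbd u
            rwa [if_neg hd, Nat.sub_zero] at this
        _ = (N.filter (fun u => ¬ D v u)).card *
              (∑ i ∈ Icc m ℓ, ℓ.choose i * b ^ i * Δ ^ (ℓ - i)) := by
            rw [Finset.sum_const, smul_eq_mul]
        _ ≤ Δ * (∑ i ∈ Icc m ℓ, ℓ.choose i * b ^ i * Δ ^ (ℓ - i)) := by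
            apply Nat.mul_le_mul_right
            calc (N.filter (fun u => ¬ D v u)).card ≤ N.card := Finset.card_filter_le _ _
              _ = (G.neighborSet v).ncard := (Set.ncard_eq_toFinset_card _ _).symm
              _ ≤ Δ := hmax v

lemma arith_bound (b k Δ : ℕ) (hΔ : 1 ≤ Δ) (hk : 1 ≤ k) :
    ∑ ℓ ∈ Icc 1 k, ∑ i ∈ Icc ((ℓ + 1) / 2) ℓ, ℓ.choose i * b ^ i * Δ ^ (ℓ - i)
      ≤ 2 * k * (2 * b) ^ k * Δ ^ (k / 2) := by
  rcases Nat.eq_zero_or_pos b with rfl | hb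
  · have h0 : ∀ ℓ ∈ Icc 1 k, ∑ i ∈ Icc ((ℓ + 1) / 2) ℓ, ℓ.choose i * 0 ^ i * Δ ^ (ℓ - i) = 0 := by
      intro ℓ hℓ
      refine Finset.sum_eq_zero fun i hi => ?_
      have h1 : 1 ≤ ℓ := (mem_Icc.mp hℓ).1
      have h2 : (ℓ+1)/2 ≤ i := (mem_Icc.mp hi).1
      have hi0 : i ≠ 0 := by omega
      rw [zero_pow hi0, mul_zero, zero_mul]
    rw [Finset.sum_congr rfl h0, Finset.sum_const, smul_eq_mul, mul_zero]
    exact Nat.zero_le _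
  · have hinner : ∀ ℓ ∈ Icc 1 k,
        ∑ i ∈ Icc ((ℓ + 1) / 2) ℓ, ℓ.choose i * b ^ i * Δ ^ (ℓ - i)
          ≤ (2*b)^k * Δ^(k/2) := by
      intro ℓ hℓ
      obtain ⟨h1, h2⟩ := mem_Icc.mp hℓ
      calc ∑ i ∈ Icc ((ℓ + 1) / 2) ℓ, ℓ.choose i * b ^ i * Δ ^ (ℓ - i)
          ≤ ∑ i ∈ Icc ((ℓ + 1) / 2) ℓ, ℓ.choose i * (b ^ k * Δ ^ (k/2)) := by
            refine Finset.sum_le_sum fun i hi => ?_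
            obtain ⟨hi1, hi2⟩ := mem_Icc.mp hi
            rw [mul_assoc]
            apply Nat.mul_le_mul_left
            exact Nat.mul_le_mul (Nat.pow_le_pow_right hb (by omega))
              (Nat.pow_le_pow_right hΔ (by omega))
        _ = (∑ i ∈ Icc ((ℓ + 1) / 2) ℓ, ℓ.choose i) * (b ^ k * Δ ^ (k/2)) := by
            rw [Finset.sum_mul]
        _ ≤ 2 ^ k * (b ^ k * Δ ^ (k/2)) := by
            apply Nat.mul_le_mul_right
            calc ∑ i ∈ Icc ((ℓ + 1) / 2) ℓ, ℓ.choose i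
                ≤ ∑ i ∈ range (ℓ+1), ℓ.choose i :=
                  Finset.sum_le_sum_of_subset (by intro x hx; simp at hx ⊢; omega)
              _ = 2 ^ ℓ := Nat.sum_range_choose ℓ
              _ ≤ 2 ^ k := Nat.pow_le_pow_right (by norm_num) h2
        _ = (2*b)^k * Δ^(k/2) := by rw [mul_pow]; ring
    calc ∑ ℓ ∈ Icc 1 k, ∑ i ∈ Icc ((ℓ + 1) / 2) ℓ, ℓ.choose i * b ^ i * Δ ^ (ℓ - i)
        ≤ ∑ _ℓ ∈ Icc 1 k, (2*b)^k * Δ^(k/2) := Finset.sum_le_sum hinner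
      _ = k * ((2*b)^k * Δ^(k/2)) := by
          rw [Finset.sum_const, smul_eq_mul, Nat.card_Icc]
          norm_num
      _ ≤ (2 * k) * ((2*b)^k * Δ^(k/2)) := Nat.mul_le_mul_right _ (by omega)
      _ = 2 * k * (2 * b) ^ k * Δ ^ (k / 2) := by ring

end aux

/-- Suppose the edges of `G` are oriented (via the relation `D`) so that every
vertex has outdegree at most `b`, and `G` has diameter at most `k` and maximum
degree at most `Δ ≥ 1`. Then for every vertex `v`, the number of vertices `w`
reachable from `v` by a path of length `ℓ` with `1 ≤ ℓ ≤ k` containing at least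
`⌈ℓ/2⌉` forward-oriented edges is at most
`∑_{ℓ=1}^{k} ∑_{i=⌈ℓ/2⌉}^{ℓ} C(ℓ,i) b^i Δ^{ℓ−i} ≤ 2k(2b)^k Δ^{⌊k/2⌋}`. -/
theorem charged_pairs_bound {V : Type*} [Fintype V] (G : SimpleGraph V)
    (D : V → V → Prop) [DecidableRel D] (b k Δ : ℕ)
    (hΔ : 1 ≤ Δ) (hk : 1 ≤ k)
    (hor : ∀ v w : V, G.Adj v w → Xor' (D v w) (D w v))
    (hsub : ∀ v w : V, D v w → G.Adj v w)
    (hout : ∀ v : V, {w | D v w}.ncard ≤ b)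
    (hmax : ∀ v : V, (G.neighborSet v).ncard ≤ Δ)
    (hconn : G.Connected)
    (hdiam : ∀ u v : V, G.dist u v ≤ k)
    (v : V) :
    {w : V | ∃ ℓ, 1 ≤ ℓ ∧ ℓ ≤ k ∧ ∃ p : G.Walk v w, p.IsPath ∧ p.length = ℓ ∧
        (ℓ + 1) / 2 ≤ p.darts.countP (fun d => decide (D d.toProd.1 d.toProd.2))}.ncard ≤
      ∑ ℓ ∈ Finset.Icc 1 k, ∑ i ∈ Finset.Icc ((ℓ + 1) / 2) ℓ,
        ℓ.choose i * b ^ i * Δ ^ (ℓ - i) ∧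
    ∑ ℓ ∈ Finset.Icc 1 k, ∑ i ∈ Finset.Icc ((ℓ + 1) / 2) ℓ,
        ℓ.choose i * b ^ i * Δ ^ (ℓ - i) ≤ 2 * k * (2 * b) ^ k * Δ ^ (k / 2) := by
  classical
  refine ⟨?_, arith_bound b k Δ hΔ hk⟩
  set Lset : ℕ → Set (List V) := fun ℓ =>
    {l | l.length = ℓ ∧ List.Chain G.Adj v l ∧ (ℓ+1)/2 ≤ countFwd D v l} with hLset
  set LU : Set (List V) := ⋃ ℓ ∈ Finset.Icc 1 k, Lset ℓ with hLU
  have hLsetfin : ∀ ℓ, (Lset ℓ).Finite := fun ℓ =>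
    (List.finite_length_eq V ℓ).subset fun l hl => hl.1
  have hLUfin : LU.Finite :=
    Set.Finite.biUnion (Finset.Icc 1 k).finite_toSet fun ℓ _ => hLsetfin ℓ
  have hex : ∀ w : V, (∃ ℓ, 1 ≤ ℓ ∧ ℓ ≤ k ∧ ∃ p : G.Walk v w, p.IsPath ∧ p.length = ℓ ∧
        (ℓ + 1) / 2 ≤ p.darts.countP (fun d => decide (D d.toProd.1 d.toProd.2))) →
      ∃ l, l ∈ LU ∧ l.getLast? = some w := by
    rintro w ⟨ℓ, h1, h2, p, hp, hlen, hcnt⟩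
    have htlen : p.support.tail.length = ℓ := by
      rw [List.length_tail, SimpleGraph.Walk.length_support, hlen]
      omega
    refine ⟨p.support.tail, ?_, ?_⟩
    · simp only [hLU, Set.mem_iUnion, exists_prop]
      refine ⟨ℓ, by simp [mem_Icc, h1, h2], htlen, ?_, ?_⟩
      · have hc := p.isChain_adj_support
        rw [p.support_eq_cons] at hc
        exact hc
      · exact (countP_darts_eq D p) ▸ hcnt
    · have hne : p.support.tail ≠ [] := by
        intro h0
        rw [h0] at htlen
        simp at htlen
        omega
      obtain ⟨u, t, ht⟩ := List.exists_cons_of_ne_nil hne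
      have hlast : p.support.getLast? = some w := by
        rw [List.getLast?_eq_getLast p.support_ne_nil, p.getLast_support]
      rw [p.support_eq_cons, ht, List.getLast?_cons_cons] at hlast
      rw [ht]
      exact hlast
  set F : V → List V := fun w =>
    if h : ∃ l, l ∈ LU ∧ l.getLast? = some w then h.choose else [] with hF
  have hkey : ∀ w : V, (∃ l, l ∈ LU ∧ l.getLast? = some w) →
      F w ∈ LU ∧ (F w).getLast? = some w := by
    intro w h
    rw [hF]
    simp only [dif_pos h]
    exact h.choose_spec
  refine le_trans (Set.ncard_le_ncard_of_injOn F ?_ ?_ hLUfin) ?_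
  · intro w hw
    exact (hkey w (hex w hw)).1
  · intro w1 hw1 w2 hw2 heq
    have k1 := (hkey w1 (hex w1 hw1)).2
    have k2 := (hkey w2 (hex w2 hw2)).2
    rw [heq] at k1
    rw [k1] at k2
    exact Option.some_injective _ k2
  · refine le_trans (ncard_biUnion_le _ _ (fun ℓ _ => hLsetfin ℓ)) ?_
    exact Finset.sum_le_sum fun ℓ _ => listBound G D b Δ hout hmax ℓ _ v
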